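/- arXiv:1508.05752 — 2 statements merged into one kernel-verified Lean document; each statement's English description precedes it below -/
import Mathlib

section
/- For every radius r ≥ 0, the set 𝒜_r of generalized global CA rules expressible by a local rule of radius r is strictly contained in 𝒜_{r+1}. -/
/-- A local rule of radius `r` on states `{0,1}` (modelled as `Bool`). -/
def LocalRule (r : ℕ) := (Fin (2*r+1) → Bool) → Bool

/-- The global CA map of width `M` induced by the local rule `f` of radius `r`,
with periodic boundary conditions (cells indexed by `ZMod M`). -/
def globalMap (r : ℕ) (f : LocalRule r) (M : ℕ) (x : ZMod M → Bool) : ZMod M → Bool :=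
  fun i => f (fun j => x (i + ((((j : ℕ) : ℤ) - (r : ℤ) : ℤ) : ZMod M)))

/-- A generalized global rule: a map on configurations of every finite width. -/
def GenRule := (M : ℕ) → (ZMod M → Bool) → (ZMod M → Bool)

/-- `A` is the generalized global CA rule of radius `r` induced by some local rule. -/
def IsCA (A : GenRule) (r : ℕ) : Prop := ∃ f : LocalRule r, ∀ M, A M = globalMap r f M

/-- An observation: an `N × M` array over `{0,1,?}` (modelled as `Option Bool`,
`none` = `?`), whose first row is completely observed. -/
structure Obs where
  M : ℕ
  hM : 0 < M
  N : ℕ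
  hN : 0 < N
  data : ℕ → ZMod M → Option Bool
  first : ∀ m, data 0 m ≠ none

/-- `I'` is a (spatially complete) completion of the observation `I`,
i.e. `I' ∈ com(I)`. -/
def Completes (I : Obs) (I' : ℕ → ZMod I.M → Bool) : Prop :=
  ∀ n < I.N, ∀ m b, I.data n m = some b → I' n m = b

/-- The rule `A` fits the observation `I`. -/
def Fits (A : GenRule) (I : Obs) : Prop :=
  ∃ I' : ℕ → ZMod I.M → Bool, Completes I I' ∧
    ∃ τ : ℕ → ℕ, StrictMono τ ∧ τ 0 = 0 ∧ ∀ n < I.N, (A I.M)^[τ n] (I' 0) = I' n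

/-- `𝒜_r`: the set of generalized global CA rules expressible by a local rule
of radius `r`. -/
def ruleClass (r : ℕ) : Set GenRule := {A | IsCA A r}

/-- For every radius `r ≥ 0`, `𝒜_r ⊊ 𝒜_{r+1}`. -/
theorem stmt1 (r : ℕ) : ruleClass r ⊂ ruleClass (r+1) := by
  constructor
  · -- inclusion
    rintro A ⟨f, hf⟩
    refine ⟨fun g => f (fun j => g ⟨(j : ℕ) + 1, by omega⟩), fun M => ?_⟩
    rw [hf M]
    funext x i
    unfold globalMap
    congr 1
    funext j
    congr 2
    push_cast
    ring
  · -- strictness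
    intro hsub
    set M := 2 * r + 3 with hMdef
    have hmem : (fun M => globalMap (r+1) (fun g => g 0) M) ∈ ruleClass (r+1) :=
      ⟨fun g => g 0, fun _ => rfl⟩
    obtain ⟨f, hf⟩ := hsub hmem
    have hf' := congrFun (hf M)
    set c : ZMod M := ((-(r+1) : ℤ) : ZMod M) with hc
    set x : ZMod M → Bool := fun _ => false with hx
    set y : ZMod M → Bool := fun m => decide (m = c) with hy
    -- the radius-r windows at 0 of x and y agree
    have hwin : (fun j : Fin (2*r+1) => x ((0 : ZMod M) + ((((j:ℕ):ℤ) - (r:ℤ) : ℤ) : ZMod M)))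
        = (fun j : Fin (2*r+1) => y ((0 : ZMod M) + ((((j:ℕ):ℤ) - (r:ℤ) : ℤ) : ZMod M))) := by
      funext j
      have hne : ((((j:ℕ):ℤ) - (r:ℤ) : ℤ) : ZMod M) ≠ c := by
        intro h
        rw [hc] at h
        have h2 : ((((j:ℕ):ℤ) - (r:ℤ) - (-(r+1)) : ℤ) : ZMod M) = 0 := by
          push_cast at h ⊢
          rw [h]; ring
        rw [ZMod.intCast_zmod_eq_zero_iff_dvd] at h2
        have hj : (j : ℕ) < 2*r+1 := j.isLt
        have hpos : (0 : ℤ) < ((j:ℕ):ℤ) - (r:ℤ) - (-(r+1)) := by omega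
        have := Int.le_of_dvd hpos h2
        push_cast at this
        omega
      simp only [hx, hy, zero_add]
      rw [eq_comm, decide_eq_false_iff_not]
      exact hne
    have hx0 : globalMap (r+1) (fun g => g 0) M x 0 = x c := by
      simp only [globalMap, hc]
      rfl
    have hy0 : globalMap (r+1) (fun g => g 0) M y 0 = y c := by
      simp only [globalMap, hc]
      norm_num
    have hxy : globalMap r f M x 0 = globalMap r f M y 0 := by
      simp only [globalMap]
      rw [hwin]
    rw [← hf' x, ← hf' y] at hxy
    beta_reduce at hxy
    rw [hx0, hy0] at hxy
    simp [hx, hy] at hxy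
end

section
/- Let A be a CA rule and ℐ an observation set. There exists a strictly increasing sequence (τ^I_i) of positive naturals with E_ℐ(A, (τ^I_i)) = 0 if and only if there exists a sequence (t^I_i) of positive naturals with Ẽ_ℐ(A, (t^I_i)) = 0, where Ẽ_ℐ(A,(t^I_i)) = Σ_{I∈ℐ} Σ_{n=1}^{N_I−1} dist(A^{t^I_n}(Ī^A_{(t^I_i)}[n]), Ī^A_{(t^I_i)}[n+1]). -/
/-- Distance between two entries of `{0,1,?}`: counts a mismatch only when
both entries are observed. -/
def odist (a b : Option Bool) : ℕ :=
  match a, b with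
  | some x, some y => if x = y then 0 else 1
  | _, _ => 0

/-- `dist(a,b) = Σ_{i : aᵢ,bᵢ ∈ {0,1}} |aᵢ - bᵢ|` for rows of width `M`. -/
def vdist {M : ℕ} (hM : 0 < M) (a b : ZMod M → Option Bool) : ℕ :=
  haveI : NeZero M := ⟨hM.ne'⟩
  ∑ m : ZMod M, odist (a m) (b m)

/-- The first (completely observed) row of an observation, as a `{0,1}`-row. -/
def row0 (I : Obs) : ZMod I.M → Bool := fun m => (I.data 0 m).getD false

/-- The error measure `E_I(A,(τᵢ)) = Σ_{n=1}^{N-1} dist(A^{τₙ}(I[1]), I[n+1])`. -/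
def Emeasure (A : GenRule) (I : Obs) (τ : ℕ → ℕ) : ℕ :=
  ∑ n ∈ Finset.range (I.N - 1),
    vdist I.hM (fun m => some ((A I.M)^[τ (n+1)] (row0 I) m)) (I.data (n+1))

/-- The `A`-completion `Ī^A_{(tᵢ)}` of `I` with time gaps `(tᵢ)`. -/
def completion (A : GenRule) (I : Obs) (t : ℕ → ℕ) : ℕ → ZMod I.M → Bool
  | 0, m => (I.data 0 m).getD false
  | n+1, m => (I.data (n+1) m).getD ((A I.M)^[t n] (fun m' => completion A I t n m') m)

/-- The error measure `Ẽ_I(A,(tᵢ))`, computed on the `A`-completion of `I`. -/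
def Etilde (A : GenRule) (I : Obs) (t : ℕ → ℕ) : ℕ :=
  ∑ n ∈ Finset.range (I.N - 1),
    vdist I.hM (fun m => some ((A I.M)^[t n] (completion A I t n) m))
      (fun m => some (completion A I t (n+1) m))

lemma odist_some (x y : Bool) : odist (some x) (some y) = 0 ↔ x = y := by
  cases x <;> cases y <;> simp [odist]

lemma vdist_eq_zero {M : ℕ} (hM : 0 < M) {a b : ZMod M → Option Bool} :
    vdist hM a b = 0 ↔ ∀ m, odist (a m) (b m) = 0 := by
  haveI : NeZero M := ⟨hM.ne'⟩
  unfold vdist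
  rw [Finset.sum_eq_zero_iff]
  simp

lemma stmt8_forward (A : GenRule) (I : Obs) (τ : ℕ → ℕ) (hsm : StrictMono τ)
    (h0 : τ 0 = 0) (hE : Emeasure A I τ = 0) :
    Etilde A I (fun n => τ (n+1) - τ n) = 0 := by
  set t : ℕ → ℕ := fun n => τ (n+1) - τ n with htdef
  have hrow : ∀ n < I.N - 1, ∀ m b, I.data (n+1) m = some b →
      (A I.M)^[τ (n+1)] (row0 I) m = b := by
    intro n hn m b hb
    have h1 := (Finset.sum_eq_zero_iff).mp hE n (Finset.mem_range.mpr hn)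
    have h2 := (vdist_eq_zero I.hM).mp h1 m
    rw [hb] at h2
    exact (odist_some _ _).mp h2
  have hcomp : ∀ n, n ≤ I.N - 1 → ∀ m,
      completion A I t n m = (A I.M)^[τ n] (row0 I) m := by
    intro n
    induction n with
    | zero => intro _ m; simp [completion, row0, h0]
    | succ n ih =>
      intro hn m
      have hn' : n < I.N - 1 := hn
      have ihf : (fun m' => completion A I t n m') = (A I.M)^[τ n] (row0 I) :=
        funext fun m => ih (le_of_lt hn') m
      have hiter : (A I.M)^[t n] ((A I.M)^[τ n] (row0 I)) = (A I.M)^[τ (n+1)] (row0 I) := by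
        rw [← Function.iterate_add_apply]
        congr 1
        have h : τ n ≤ τ (n+1) := (hsm (by omega : n < n + 1)).le
        show τ (n+1) - τ n + τ n = τ (n+1)
        omega
      cases hb : I.data (n+1) m with
      | none =>
        simp only [completion, hb, Option.getD_none]
        rw [ihf, hiter]
      | some b =>
        simp only [completion, hb, Option.getD_some]
        exact (hrow n hn' m b hb).symm
  unfold Etilde
  apply Finset.sum_eq_zero
  intro n hn
  rw [vdist_eq_zero]
  intro m
  rw [odist_some]
  have hn' := Finset.mem_range.mp hn
  have h1 : completion A I t (n+1) m = (A I.M)^[τ (n+1)] (row0 I) m := hcomp (n+1) hn' m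
  have h2 : (A I.M)^[t n] (completion A I t n) m = (A I.M)^[τ (n+1)] (row0 I) m := by
    have ihf : (completion A I t n) = (A I.M)^[τ n] (row0 I) :=
      funext fun m => hcomp n (le_of_lt hn') m
    rw [ihf, ← Function.iterate_add_apply]
    have h : τ n ≤ τ (n+1) := (hsm (by omega : n < n + 1)).le
    have harg : t n + τ n = τ (n+1) := by
      show τ (n+1) - τ n + τ n = τ (n+1)
      omega
    rw [harg]
  rw [h2, h1]

lemma stmt8_backward (A : GenRule) (I : Obs) (t : ℕ → ℕ)
    (hE : Etilde A I t = 0) :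
    Emeasure A I (fun n => ∑ i ∈ Finset.range n, t i) = 0 := by
  set τ : ℕ → ℕ := fun n => ∑ i ∈ Finset.range n, t i with hτdef
  have hstep : ∀ n < I.N - 1, ∀ m,
      (A I.M)^[t n] (completion A I t n) m = completion A I t (n+1) m := by
    intro n hn m
    have h1 := Finset.sum_eq_zero_iff.mp hE n (Finset.mem_range.mpr hn)
    have h2 := (vdist_eq_zero I.hM).mp h1 m
    exact (odist_some _ _).mp h2
  have hcomp : ∀ n, n ≤ I.N - 1 → ∀ m,
      (A I.M)^[τ n] (row0 I) m = completion A I t n m := by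
    intro n
    induction n with
    | zero => intro _ m; simp [hτdef, completion, row0]
    | succ n ih =>
      intro hn m
      have hτ : τ (n+1) = t n + τ n := by
        simp only [hτdef, Finset.sum_range_succ]; omega
      rw [hτ, Function.iterate_add_apply]
      have ihf : (A I.M)^[τ n] (row0 I) = completion A I t n :=
        funext fun m => ih (le_of_lt hn) m
      rw [ihf]
      exact hstep n hn m
  unfold Emeasure
  apply Finset.sum_eq_zero
  intro n hn
  rw [vdist_eq_zero]
  intro m
  have hn' := Finset.mem_range.mp hn
  cases hb : I.data (n+1) m with
  | none => simp [odist]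
  | some b =>
    rw [odist_some]
    have hc : completion A I t (n+1) m = b := by
      simp only [completion, hb, Option.getD_some]
    rw [hcomp (n+1) hn' m, hc]

/-- There is a family of strictly increasing sequences of positive times
`(τ^I)` with `E_ℐ(A,(τ^I)) = 0` iff there is a family of sequences of positive
time gaps `(t^I)` with `Ẽ_ℐ(A,(t^I)) = 0`. -/
theorem stmt8 (𝓘 : Finset Obs) (A : GenRule) (hA : ∃ r, IsCA A r) :
    (∃ τ : Obs → ℕ → ℕ,
      (∀ I ∈ 𝓘, StrictMono (τ I) ∧ τ I 0 = 0) ∧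
      ∑ I ∈ 𝓘, Emeasure A I (τ I) = 0) ↔
    (∃ t : Obs → ℕ → ℕ,
      (∀ I ∈ 𝓘, ∀ n, 1 ≤ t I n) ∧
      ∑ I ∈ 𝓘, Etilde A I (t I) = 0) := by
  constructor
  · rintro ⟨τ, hτ, hsum⟩
    refine ⟨fun I n => τ I (n+1) - τ I n, fun I hI n => ?_, ?_⟩
    · have := (hτ I hI).1 (by omega : n < n + 1)
      show 1 ≤ τ I (n+1) - τ I n
      omega
    · apply Finset.sum_eq_zero
      intro I hI
      exact stmt8_forward A I (τ I) (hτ I hI).1 (hτ I hI).2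
        (Finset.sum_eq_zero_iff.mp hsum I hI)
  · rintro ⟨t, ht, hsum⟩
    refine ⟨fun I n => ∑ i ∈ Finset.range n, t I i, fun I hI => ⟨?_, by simp⟩, ?_⟩
    · apply strictMono_nat_of_lt_succ
      intro n
      show (∑ i ∈ Finset.range n, t I i) < ∑ i ∈ Finset.range (n+1), t I i
      rw [Finset.sum_range_succ]
      have := ht I hI n; omega
    · apply Finset.sum_eq_zero
      intro I hI
      exact stmt8_backward A I (t I) (Finset.sum_eq_zero_iff.mp hsum I hI)
end
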